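/- arXiv:2605.22171 — 2 statements merged into one kernel-verified Lean document; each statement's English description precedes it below -/
import Mathlib

section
/- Let S be a symmetric (m+n)×(m+n) real matrix with block structure S = [[A, C],[Cᵀ, B]] where A is m×m symmetric, B is n×n symmetric, and C is m×n. Suppose λ_max(A) ≤ -c_θ, λ_max(B) ≤ -c_V, and ‖C‖₂ ≤ β for constants c_θ, c_V > 0 and β ≥ 0. Then λ_max(S) ≤ ½(-(c_θ + c_V) + √((c_θ - c_V)² + 4β²)). -/
open Matrix Finset

/-- Euclidean norm of a finitely-indexed real vector. -/
noncomputable def euclNorm {n : Type*} [Fintype n] (x : n → ℝ) : ℝ :=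
  Real.sqrt (∑ i, x i ^ 2)

/-- Largest eigenvalue of a (Hermitian = real symmetric) matrix. -/
noncomputable def lamMax {n : Type*} [Fintype n] [DecidableEq n] [Nonempty n]
    {A : Matrix n n ℝ} (hA : A.IsHermitian) : ℝ :=
  ⨆ i, hA.eigenvalues i

/-- Operator 2-norm of a rectangular real matrix. -/
noncomputable def opNorm2 {m n : Type*} [Fintype m] [Fintype n] (C : Matrix m n ℝ) : ℝ :=
  sSup {r | ∃ x : n → ℝ, euclNorm x ≤ 1 ∧ r = euclNorm (C.mulVec x)}

lemma euclNorm_nonneg {n : Type*} [Fintype n] (x : n → ℝ) : 0 ≤ euclNorm x :=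
  Real.sqrt_nonneg _

lemma euclNorm_sq {n : Type*} [Fintype n] (x : n → ℝ) : euclNorm x ^ 2 = ∑ i, x i ^ 2 :=
  Real.sq_sqrt (by positivity)

lemma dotProduct_self_eq {n : Type*} [Fintype n] (x : n → ℝ) : x ⬝ᵥ x = euclNorm x ^ 2 := by
  rw [euclNorm_sq]; simp [dotProduct, sq]

lemma dotProduct_le_euclNorm {n : Type*} [Fintype n] (x y : n → ℝ) :
    x ⬝ᵥ y ≤ euclNorm x * euclNorm y :=
  Real.sum_mul_le_sqrt_mul_sqrt _ _ _

lemma euclNorm_smul {n : Type*} [Fintype n] (c : ℝ) (x : n → ℝ) :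
    euclNorm (c • x) = |c| * euclNorm x := by
  unfold euclNorm
  rw [← Real.sqrt_sq_eq_abs, ← Real.sqrt_mul (sq_nonneg c), Finset.mul_sum]
  congr 1; exact Finset.sum_congr rfl fun i _ => by simp [mul_pow]

lemma euclNorm_eq_zero {n : Type*} [Fintype n] {x : n → ℝ} (h : euclNorm x = 0) : x = 0 := by
  unfold euclNorm at h
  have hs : (∑ i, x i ^ 2) = 0 := by
    have := Real.sqrt_eq_zero (by positivity) |>.mp h
    exact this
  funext i
  have := (Finset.sum_eq_zero_iff_of_nonneg (fun i _ => sq_nonneg (x i))).mp hs i (Finset.mem_univ i)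
  exact pow_eq_zero_iff (by norm_num) |>.mp this

lemma eigenvalue_le_lamMax {n : Type*} [Fintype n] [DecidableEq n] [Nonempty n]
    {A : Matrix n n ℝ} (hA : A.IsHermitian) (i : n) : hA.eigenvalues i ≤ lamMax hA :=
  le_ciSup (Set.finite_range _).bddAbove i

lemma rayleigh_le {n : Type*} [Fintype n] [DecidableEq n] [Nonempty n]
    {A : Matrix n n ℝ} (hA : A.IsHermitian) (x : n → ℝ) :
    x ⬝ᵥ (A *ᵥ x) ≤ lamMax hA * (x ⬝ᵥ x) := by
  set U : Matrix n n ℝ := (hA.eigenvectorUnitary : Matrix n n ℝ) with hU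
  have hstar : star U = Uᵀ := by
    ext i j; simp [Matrix.star_eq_conjTranspose, Matrix.conjTranspose_apply]
  set y : n → ℝ := Uᵀ *ᵥ x with hy
  have hUU : U * Uᵀ = 1 := by
    rw [← hstar]; exact (Unitary.mem_iff.mp hA.eigenvectorUnitary.2).2
  have hyy : y ⬝ᵥ y = x ⬝ᵥ x := by
    rw [hy, Matrix.mulVec_transpose, ← Matrix.dotProduct_mulVec, ← Matrix.mulVec_transpose,
      Matrix.mulVec_mulVec, hUU, Matrix.one_mulVec]
  have hdiag : (Matrix.diagonal (RCLike.ofReal ∘ hA.eigenvalues) : Matrix n n ℝ)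
      = Matrix.diagonal hA.eigenvalues := by
    ext i j; by_cases h : i = j <;> simp [Matrix.diagonal_apply, h]
  have hAx : A *ᵥ x = U *ᵥ ((Matrix.diagonal hA.eigenvalues) *ᵥ y) := by
    conv_lhs => rw [hA.spectral_theorem]
    rw [hdiag, Unitary.conjStarAlgAut_apply, ← hU, hstar, ← Matrix.mulVec_mulVec, ← Matrix.mulVec_mulVec, ← hy]
  have hquad : x ⬝ᵥ (A *ᵥ x) = ∑ i, hA.eigenvalues i * y i ^ 2 := by
    rw [hAx, Matrix.dotProduct_mulVec, ← Matrix.mulVec_transpose, ← hy]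
    simp [dotProduct, Matrix.mulVec_diagonal]
    exact Finset.sum_congr rfl fun i _ => by ring
  rw [hquad, ← hyy, dotProduct, Finset.mul_sum]
  refine Finset.sum_le_sum fun i _ => ?_
  have h1 : hA.eigenvalues i ≤ lamMax hA := eigenvalue_le_lamMax hA i
  have h2 : (0:ℝ) ≤ y i * y i := mul_self_nonneg _
  nlinarith [h2]

lemma exists_lamMax_eigenvector {n : Type*} [Fintype n] [DecidableEq n] [Nonempty n]
    {A : Matrix n n ℝ} (hA : A.IsHermitian) :
    ∃ v : n → ℝ, v ≠ 0 ∧ A *ᵥ v = lamMax hA • v := by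
  obtain ⟨i, hi⟩ := Finite.exists_max hA.eigenvalues
  have hmax : lamMax hA = hA.eigenvalues i :=
    le_antisymm (ciSup_le hi) (eigenvalue_le_lamMax hA i)
  refine ⟨⇑(hA.eigenvectorBasis i), ?_, by rw [hmax]; exact hA.mulVec_eigenvectorBasis i⟩
  intro h
  have := hA.eigenvectorBasis.orthonormal.ne_zero i
  apply this
  ext j
  exact congrFun h j

lemma euclNorm_mulVec_le {m n : Type*} [Fintype m] [Fintype n] (C : Matrix m n ℝ)
    {β : ℝ} (hβ : 0 ≤ β) (hC : opNorm2 C ≤ β) (x : n → ℝ) :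
    euclNorm (C *ᵥ x) ≤ β * euclNorm x := by
  set K : ℝ := Real.sqrt (∑ i, ∑ j, C i j ^ 2) with hK
  have hbound : ∀ z : n → ℝ, euclNorm z ≤ 1 → euclNorm (C *ᵥ z) ≤ K := by
    intro z hz
    have hz2 : (∑ j, z j ^ 2) ≤ 1 := by
      have := euclNorm_sq z
      nlinarith [euclNorm_nonneg z]
    refine Real.sqrt_le_sqrt (Finset.sum_le_sum fun i _ => ?_)
    calc (C *ᵥ z) i ^ 2 = (∑ j, C i j * z j) ^ 2 := by rfl
      _ ≤ (∑ j, C i j ^ 2) * (∑ j, z j ^ 2) := Finset.sum_mul_sq_le_sq_mul_sq _ _ _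
      _ ≤ (∑ j, C i j ^ 2) * 1 := by
          exact mul_le_mul_of_nonneg_left hz2 (by positivity)
      _ = ∑ j, C i j ^ 2 := mul_one _
  have hbdd : BddAbove {r | ∃ x : n → ℝ, euclNorm x ≤ 1 ∧ r = euclNorm (C.mulVec x)} := by
    refine ⟨K, fun r hr => ?_⟩
    obtain ⟨z, hz1, rfl⟩ := hr
    exact hbound z hz1
  by_cases hx : x = 0
  · subst hx
    simp [Matrix.mulVec_zero]
    have : euclNorm (0 : m → ℝ) = 0 := by simp [euclNorm]
    have h0 : euclNorm (0 : n → ℝ) = 0 := by simp [euclNorm]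
    rw [this, h0, mul_zero]
  · have ha : 0 < euclNorm x := by
      rcases lt_or_eq_of_le (euclNorm_nonneg x) with h | h
      · exact h
      · exact absurd (euclNorm_eq_zero h.symm) hx
    set a := euclNorm x
    have hu : euclNorm (a⁻¹ • x) = 1 := by
      rw [euclNorm_smul, abs_of_pos (inv_pos.mpr ha)]
      field_simp
      rfl
    have hmem : euclNorm (C *ᵥ (a⁻¹ • x)) ∈
        {r | ∃ x : n → ℝ, euclNorm x ≤ 1 ∧ r = euclNorm (C.mulVec x)} :=
      ⟨a⁻¹ • x, le_of_eq hu, rfl⟩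
    have hle : euclNorm (C *ᵥ (a⁻¹ • x)) ≤ β := (le_csSup hbdd hmem).trans hC
    rw [Matrix.mulVec_smul, euclNorm_smul, abs_of_pos (inv_pos.mpr ha)] at hle
    calc euclNorm (C *ᵥ x) = a * (a⁻¹ * euclNorm (C *ᵥ x)) := by field_simp
      _ ≤ a * β := mul_le_mul_of_nonneg_left hle (le_of_lt ha)
      _ = β * a := mul_comm _ _

lemma scalar_bound (cθ cV β a b lam : ℝ) (hcθ : 0 < cθ) (hcV : 0 < cV) (hβ : 0 ≤ β)
    (ha : 0 ≤ a) (hb : 0 ≤ b) (ht : 0 < a^2 + b^2)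
    (h : lam * (a^2+b^2) ≤ -cθ*a^2 - cV*b^2 + 2*β*(a*b)) :
    lam ≤ (1/2) * (-(cθ+cV) + Real.sqrt ((cθ-cV)^2 + 4*β^2)) := by
  set D := Real.sqrt ((cθ-cV)^2+4*β^2) with hDdef
  have hD0 : 0 ≤ D := Real.sqrt_nonneg _
  have hDsq : D^2 = (cθ-cV)^2+4*β^2 := Real.sq_sqrt (by positivity)
  have hDge : |cθ-cV| ≤ D := by
    rw [← Real.sqrt_sq_eq_abs]
    exact Real.sqrt_le_sqrt (by nlinarith)
  have habs := abs_le.mp (le_refl |cθ-cV|)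
  have h1 : -(D) ≤ cθ - cV := by
    have := neg_abs_le (cθ - cV); linarith
  have h2 : cθ - cV ≤ D := le_trans (le_abs_self _) hDge
  set μ := (1/2)*(-(cθ+cV)+D) with hμ
  have hp : 0 ≤ μ + cθ := by rw [hμ]; linarith
  have hq : 0 ≤ μ + cV := by rw [hμ]; linarith
  have hpq : (μ+cθ)*(μ+cV) = β^2 := by rw [hμ]; nlinarith [hDsq]
  have hsp : Real.sqrt (μ+cθ)^2 = μ+cθ := Real.sq_sqrt hp
  have hsq : Real.sqrt (μ+cV)^2 = μ+cV := Real.sq_sqrt hq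
  have hsm : Real.sqrt (μ+cθ) * Real.sqrt (μ+cV) = β := by
    rw [← Real.sqrt_mul hp, hpq, Real.sqrt_sq hβ]
  have key : -cθ*a^2 - cV*b^2 + 2*β*(a*b) ≤ μ*(a^2+b^2) := by
    nlinarith [sq_nonneg (Real.sqrt (μ+cθ) * a - Real.sqrt (μ+cV) * b), hsp, hsq, hsm,
      mul_nonneg ha hb]
  have hfin : lam * (a^2+b^2) ≤ μ * (a^2+b^2) := h.trans key
  exact le_of_mul_le_mul_right hfin ht

theorem stmt0 {m n : ℕ} [NeZero m] [NeZero n]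
    (A : Matrix (Fin m) (Fin m) ℝ) (B : Matrix (Fin n) (Fin n) ℝ)
    (C : Matrix (Fin m) (Fin n) ℝ)
    (hA : A.IsHermitian) (hB : B.IsHermitian)
    (hS : (Matrix.fromBlocks A C Cᵀ B).IsHermitian)
    (cθ cV β : ℝ) (hcθ : 0 < cθ) (hcV : 0 < cV) (hβ : 0 ≤ β)
    (hAmax : lamMax hA ≤ -cθ) (hBmax : lamMax hB ≤ -cV)
    (hC : opNorm2 C ≤ β) :
    lamMax hS ≤ (1/2) * (-(cθ + cV) + Real.sqrt ((cθ - cV)^2 + 4*β^2)) := by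
  obtain ⟨z, hz0, hz⟩ := exists_lamMax_eigenvector hS
  set lam := lamMax hS with hlam
  set x : Fin m → ℝ := z ∘ Sum.inl with hxdef
  set y : Fin n → ℝ := z ∘ Sum.inr with hydef
  have hze : z = Sum.elim x y := by funext i; cases i <;> rfl
  have hSz : z ⬝ᵥ ((Matrix.fromBlocks A C Cᵀ B) *ᵥ z) = lam * (x ⬝ᵥ x + y ⬝ᵥ y) := by
    rw [hz]
    rw [show z ⬝ᵥ (lam • z) = lam * (z ⬝ᵥ z) from by
      simp [dotProduct_smul, smul_eq_mul]]
    congr 1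
    rw [hze, sumElim_dotProduct_sumElim]
  have hblock : z ⬝ᵥ ((Matrix.fromBlocks A C Cᵀ B) *ᵥ z)
      = x ⬝ᵥ (A *ᵥ x) + 2*(x ⬝ᵥ (C *ᵥ y)) + y ⬝ᵥ (B *ᵥ y) := by
    conv_lhs => rw [hze, Matrix.fromBlocks_mulVec, sumElim_dotProduct_sumElim]
    rw [dotProduct_add, dotProduct_add]
    have hsym : y ⬝ᵥ (Cᵀ *ᵥ x) = x ⬝ᵥ (C *ᵥ y) := by
      rw [Matrix.dotProduct_mulVec, Matrix.vecMul_transpose, dotProduct_comm]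
    simp only [Sum.elim_comp_inl, Sum.elim_comp_inr]
    rw [hsym]; ring
  set a := euclNorm x with hadef
  set b := euclNorm y with hbdef
  have hxx : x ⬝ᵥ x = a ^ 2 := dotProduct_self_eq x
  have hyy : y ⬝ᵥ y = b ^ 2 := dotProduct_self_eq y
  have ha0 : 0 ≤ a := euclNorm_nonneg x
  have hb0 : 0 ≤ b := euclNorm_nonneg y
  have hbA : x ⬝ᵥ (A *ᵥ x) ≤ -cθ * a ^ 2 := by
    calc x ⬝ᵥ (A *ᵥ x) ≤ lamMax hA * (x ⬝ᵥ x) := rayleigh_le hA x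
      _ ≤ -cθ * (x ⬝ᵥ x) := by
          apply mul_le_mul_of_nonneg_right hAmax
          rw [hxx]; positivity
      _ = -cθ * a ^ 2 := by rw [hxx]
  have hbB : y ⬝ᵥ (B *ᵥ y) ≤ -cV * b ^ 2 := by
    calc y ⬝ᵥ (B *ᵥ y) ≤ lamMax hB * (y ⬝ᵥ y) := rayleigh_le hB y
      _ ≤ -cV * (y ⬝ᵥ y) := by
          apply mul_le_mul_of_nonneg_right hBmax
          rw [hyy]; positivity
      _ = -cV * b ^ 2 := by rw [hyy]
  have hbC : x ⬝ᵥ (C *ᵥ y) ≤ β * (a * b) := by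
    calc x ⬝ᵥ (C *ᵥ y) ≤ euclNorm x * euclNorm (C *ᵥ y) := dotProduct_le_euclNorm _ _
      _ ≤ a * (β * b) := mul_le_mul_of_nonneg_left (euclNorm_mulVec_le C hβ hC y) ha0
      _ = β * (a * b) := by ring
  have hpos : 0 < a ^ 2 + b ^ 2 := by
    rw [← hxx, ← hyy]
    have hzz : x ⬝ᵥ x + y ⬝ᵥ y = z ⬝ᵥ z := by
      rw [hze, sumElim_dotProduct_sumElim]
    rw [hzz]
    obtain ⟨i, hi⟩ := Function.ne_iff.mp hz0
    unfold dotProduct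
    refine Finset.sum_pos' (fun j _ => mul_self_nonneg _) ⟨i, Finset.mem_univ i, ?_⟩
    exact mul_self_pos.mpr hi
  have hmain : lam * (a ^ 2 + b ^ 2) ≤ -cθ * a ^ 2 - cV * b ^ 2 + 2 * β * (a * b) := by
    have := hSz.symm.trans hblock
    rw [hxx, hyy] at this
    linarith
  exact scalar_bound cθ cV β a b lam hcθ hcV hβ ha0 hb0 hpos hmain
end

section
/- Let R_θ be an (N-1)×N matrix with orthonormal rows spanning 1_N^⊥, let L_sym and ⎯L be symmetric Laplacian matrices with L_sym - ⎯L positive semidefinite, and let Δ be a diagonal matrix with max_i Δ_ii ≤ δ. If λ₂(⎯L) > δ, then λ_max(R_θ(-L_sym + Δ)R_θᵀ) ≤ -(λ₂(⎯L) - δ) < 0. -/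
open Matrix Finset

/-- Second-smallest eigenvalue (algebraic connectivity) of a Laplacian, as the
minimum Rayleigh quotient over unit vectors orthogonal to the all-ones vector. -/
noncomputable def lambda2 {N : ℕ} (L : Matrix (Fin N) (Fin N) ℝ) : ℝ :=
  sInf {r | ∃ v : Fin N → ℝ, euclNorm v = 1 ∧ (∑ i, v i) = 0 ∧ r = v ⬝ᵥ L.mulVec v}

lemma psd_quad {n : Type*} [Fintype n] {M : Matrix n n ℝ} (hM : M.PosSemidef)
    (x : n → ℝ) : 0 ≤ x ⬝ᵥ M.mulVec x := by
  simpa using hM.dotProduct_mulVec_nonneg x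

theorem stmt6 {N : ℕ} [NeZero N] [NeZero (N - 1)]
    (Rθ : Matrix (Fin (N - 1)) (Fin N) ℝ)
    (hortho : Rθ * Rθᵀ = 1)
    (hperp : Rθ.mulVec (fun _ => 1) = 0)
    (Lsym Lbar : Matrix (Fin N) (Fin N) ℝ)
    (hLsym : Lsym.IsHermitian) (hLsymPSD : Lsym.PosSemidef)
    (hLsym1 : Lsym.mulVec (fun _ => 1) = 0)
    (hLbar : Lbar.IsHermitian) (hLbarPSD : Lbar.PosSemidef)
    (hLbar1 : Lbar.mulVec (fun _ => 1) = 0)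
    (hdiff : (Lsym - Lbar).PosSemidef)
    (d : Fin N → ℝ) (δ : ℝ) (hd : ∀ i, d i ≤ δ)
    (hgap : lambda2 Lbar > δ)
    (hproj : (Rθ * (-Lsym + Matrix.diagonal d) * Rθᵀ).IsHermitian) :
    lamMax hproj ≤ -(lambda2 Lbar - δ) ∧ -(lambda2 Lbar - δ) < 0 := by
  have hneg : -(lambda2 Lbar - δ) < 0 := by linarith
  refine ⟨?_, hneg⟩
  apply ciSup_le
  intro i
  -- the eigenvector
  set y : Fin (N - 1) → ℝ := ⇑(hproj.eigenvectorBasis i) with hy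
  have hynorm : ‖hproj.eigenvectorBasis i‖ = 1 := hproj.eigenvectorBasis.orthonormal.1 i
  have hysq : y ⬝ᵥ y = 1 := by
    have h2 := congrArg (· ^ 2) hynorm
    rw [EuclideanSpace.norm_eq] at h2
    simp only [one_pow] at h2
    rw [Real.sq_sqrt (by positivity)] at h2
    simpa [dotProduct, Real.norm_eq_abs, sq_abs, sq] using h2
  have heig : (Rθ * (-Lsym + Matrix.diagonal d) * Rθᵀ) *ᵥ y =
      hproj.eigenvalues i • y := hproj.mulVec_eigenvectorBasis i
  set x : Fin N → ℝ := Rθᵀ *ᵥ y with hx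
  -- ‖x‖² = 1
  have key : ∀ z : Fin N → ℝ, y ⬝ᵥ (Rθ *ᵥ z) = x ⬝ᵥ z := by
    intro z
    rw [dotProduct_mulVec, ← mulVec_transpose]
  have hxsq : x ⬝ᵥ x = 1 := by
    have : y ⬝ᵥ (Rθ *ᵥ x) = y ⬝ᵥ y := by
      rw [hx, mulVec_mulVec, hortho, one_mulVec]
    rw [key x] at this
    rw [this, hysq]
  have hxsum : ∑ j, x j = 0 := by
    have h1 : (fun _ : Fin N => (1:ℝ)) ⬝ᵥ x = ∑ j, x j := by
      simp [dotProduct]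
    have h2 : (fun _ : Fin N => (1:ℝ)) ⬝ᵥ x = (Rθ *ᵥ fun _ => 1) ⬝ᵥ y := by
      rw [hx, dotProduct_mulVec, ← mulVec_transpose, transpose_transpose]
    rw [← h1, h2, hperp, zero_dotProduct]
  have hxnorm : euclNorm x = 1 := by
    have : ∑ j, x j ^ 2 = 1 := by
      simpa [dotProduct, sq] using hxsq
    simp [euclNorm, this]
  -- eigenvalue = Rayleigh quotient of x
  have hval : hproj.eigenvalues i = x ⬝ᵥ ((-Lsym + Matrix.diagonal d) *ᵥ x) := by
    have h1 : y ⬝ᵥ ((Rθ * (-Lsym + Matrix.diagonal d) * Rθᵀ) *ᵥ y) = hproj.eigenvalues i := by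
      rw [heig, dotProduct_smul, smul_eq_mul, hysq, mul_one]
    rw [← h1, ← mulVec_mulVec, ← mulVec_mulVec, key, hx]
  -- λ₂ ≤ x ⬝ᵥ Lbar x
  have hmem : x ⬝ᵥ Lbar.mulVec x ∈
      {r | ∃ v : Fin N → ℝ, euclNorm v = 1 ∧ (∑ i, v i) = 0 ∧ r = v ⬝ᵥ Lbar.mulVec v} :=
    ⟨x, hxnorm, hxsum, rfl⟩
  have hbdd : BddBelow {r | ∃ v : Fin N → ℝ, euclNorm v = 1 ∧ (∑ i, v i) = 0 ∧
      r = v ⬝ᵥ Lbar.mulVec v} := by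
    refine ⟨0, ?_⟩
    rintro r ⟨v, -, -, rfl⟩
    exact psd_quad hLbarPSD v
  have hl2 : lambda2 Lbar ≤ x ⬝ᵥ Lbar.mulVec x := csInf_le hbdd hmem
  -- x ⬝ᵥ Lbar x ≤ x ⬝ᵥ Lsym x
  have hcomp : x ⬝ᵥ Lbar.mulVec x ≤ x ⬝ᵥ Lsym.mulVec x := by
    have := psd_quad hdiff x
    rw [sub_mulVec, dotProduct_sub] at this
    linarith
  -- diagonal part
  have hdiag : x ⬝ᵥ (Matrix.diagonal d).mulVec x ≤ δ := by
    have heq : x ⬝ᵥ (Matrix.diagonal d).mulVec x = ∑ j, d j * x j ^ 2 := by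
      simp [dotProduct, mulVec_diagonal, sq]
      ring_nf
      exact Finset.sum_congr rfl fun j _ => by ring
    have hle : ∑ j, d j * x j ^ 2 ≤ ∑ j, δ * x j ^ 2 := by
      apply Finset.sum_le_sum
      intro j _
      exact mul_le_mul_of_nonneg_right (hd j) (sq_nonneg _)
    have hxs : ∑ j, x j ^ 2 = 1 := by simpa [dotProduct, sq] using hxsq
    calc x ⬝ᵥ (Matrix.diagonal d).mulVec x = ∑ j, d j * x j ^ 2 := heq
      _ ≤ ∑ j, δ * x j ^ 2 := hle
      _ = δ * ∑ j, x j ^ 2 := by rw [Finset.mul_sum]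
      _ = δ := by rw [hxs, mul_one]
  rw [hval, add_mulVec, dotProduct_add, neg_mulVec, dotProduct_neg]
  linarith
end
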